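/- Every finite connected unicyclic graph (connected graph with exactly one cycle, i.e., with |E| = |V|) is 3-paintable: Mrs. Correct wins the paint game with 2 erasers at each vertex. -/

import Mathlib

variable {V : Type*}

/-- `I` is an independent set in `G`. -/
def IndepIn (G : SimpleGraph V) (I : Finset V) : Prop :=
  ∀ u ∈ I, ∀ v ∈ I, ¬ G.Adj u v

/-- The paint game with fuel `n`: the set `A` of uncoloured vertices, with token
function `f`, can be fully coloured by Mrs. Correct within `n` rounds. -/
def PaintableAux [DecidableEq V] (G : SimpleGraph V) : ℕ → Finset V → (V → ℕ) → Prop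
  | 0, A, _ => A = ∅
  | n + 1, A, f => (∀ v ∈ A, 1 ≤ f v) ∧
      ∀ S ⊆ A, S.Nonempty → ∃ I ⊆ S, IndepIn G I ∧
        PaintableAux G n (A \ I) (fun v => if v ∈ S \ I then f v - 1 else f v)

/-- Mrs. Correct wins the paint game on the uncoloured vertex set `A` with token
function `f` (a vertex with `f v = k` can be erased `k - 1` times).  Since each round
strictly decreases the total number of tokens on uncoloured vertices, the game is
finite and this is equivalent to the usual inductive definition of paintability. -/
def Paintable [DecidableEq V] (G : SimpleGraph V) (A : Finset V) (f : V → ℕ) : Prop :=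
  ∃ n, PaintableAux G n A f

/-- `G` is `k`-paintable: Mrs. Correct wins with `k - 1` erasers at each vertex. -/
def IsPaintable [Fintype V] [DecidableEq V] (G : SimpleGraph V) (k : ℕ) : Prop :=
  Paintable G Finset.univ fun _ => k

/-- The paintability (on-line choice number) `χ_P`. -/
noncomputable def chiP [Fintype V] [DecidableEq V] (G : SimpleGraph V) : ℕ :=
  sInf {k | IsPaintable G k}

section Greedy

variable [DecidableEq V] (G : SimpleGraph V) [DecidableRel G.Adj]

def greedyAux : List V → Finset V → Finset V
  | [], acc => acc
  | x :: xs, acc =>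
      greedyAux xs (if ∀ u ∈ acc, ¬ G.Adj u x then insert x acc else acc)

lemma subset_greedyAux : ∀ (l : List V) (acc : Finset V), acc ⊆ greedyAux G l acc := by
  intro l
  induction l with
  | nil => intro acc; simp [greedyAux]
  | cons x xs ih =>
      intro acc
      simp only [greedyAux]
      split
      · exact (Finset.subset_insert x acc).trans (ih _)
      · exact ih _

lemma greedyAux_subset : ∀ (l : List V) (acc : Finset V),
    greedyAux G l acc ⊆ acc ∪ l.toFinset := by
  intro l
  induction l with
  | nil => intro acc; simp [greedyAux]
  | cons x xs ih =>
      intro acc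
      simp only [greedyAux]
      split
      · refine (ih _).trans ?_
        intro w hw
        simp only [Finset.mem_union, Finset.mem_insert, List.toFinset_cons] at hw ⊢
        tauto
      · refine (ih _).trans ?_
        intro w hw
        simp only [Finset.mem_union, Finset.mem_insert, List.toFinset_cons] at hw ⊢
        tauto

lemma greedyAux_indep : ∀ (l : List V) (acc : Finset V),
    IndepIn G acc → IndepIn G (greedyAux G l acc) := by
  intro l
  induction l with
  | nil => intro acc h; simpa [greedyAux] using h
  | cons x xs ih =>
      intro acc h
      simp only [greedyAux]
      split
      · rename_i hcond
        apply ih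
        intro u hu v hv
        simp only [Finset.mem_insert] at hu hv
        rcases hu with rfl | hu <;> rcases hv with rfl | hv
        · exact G.loopless.irrefl _
        · intro hadj; exact hcond v hv (G.adj_symm hadj)
        · exact hcond u hu
        · exact h u hu v hv
      · exact ih _ h

lemma greedyAux_back (idx : V → ℕ) : ∀ (l : List V) (acc : Finset V),
    l.Pairwise (fun a b => idx a < idx b) →
    (∀ u ∈ acc, ∀ x ∈ l, idx u < idx x) →
    ∀ v ∈ l, v ∉ greedyAux G l acc →
      ∃ u ∈ greedyAux G l acc, G.Adj u v ∧ idx u < idx v := by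
  intro l
  induction l with
  | nil => intro acc _ _ v hv; simp at hv
  | cons x xs ih =>
      intro acc hpair hacc v hv hvI
      have hpair' := (List.pairwise_cons.mp hpair).2
      have hxlt := (List.pairwise_cons.mp hpair).1
      simp only [greedyAux] at hvI ⊢
      by_cases hcond : ∀ u ∈ acc, ¬ G.Adj u x
      · rw [if_pos hcond] at hvI ⊢
        have hacc' : ∀ u ∈ insert x acc, ∀ y ∈ xs, idx u < idx y := by
          intro u hu y hy
          rcases Finset.mem_insert.mp hu with rfl | hu
          · exact hxlt y hy
          · exact hacc u hu y (List.mem_cons_of_mem _ hy)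
        rcases List.mem_cons.mp hv with rfl | hv
        · exact absurd (subset_greedyAux G xs _ (Finset.mem_insert_self v acc)) hvI
        · exact ih _ hpair' hacc' v hv hvI
      · rw [if_neg hcond] at hvI ⊢
        push_neg at hcond
        obtain ⟨u, hu, hadj⟩ := hcond
        have hacc' : ∀ w ∈ acc, ∀ y ∈ xs, idx w < idx y := by
          intro w hw y hy; exact hacc w hw y (List.mem_cons_of_mem _ hy)
        rcases List.mem_cons.mp hv with rfl | hv
        · exact ⟨u, subset_greedyAux G xs acc hu, hadj, hacc u hu v List.mem_cons_self⟩
        · exact ih _ hpair' hacc' v hv hvI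

lemma paintableAux_of_back (idx : V → ℕ) (hinj : Function.Injective idx) :
    ∀ (n : ℕ) (A : Finset V) (f : V → ℕ), A.card ≤ n →
    (∀ v ∈ A, (A.filter fun u => G.Adj u v ∧ idx u < idx v).card + 1 ≤ f v) →
    PaintableAux G n A f := by
  intro n
  induction n with
  | zero =>
      intro A f hcard _
      have : A = ∅ := Finset.card_eq_zero.mp (Nat.le_zero.mp hcard)
      simpa [PaintableAux] using this
  | succ n ih =>
      intro A f hcard hf
      constructor
      · intro v hv
        exact le_trans (Nat.le_add_left 1 _) (hf v hv)
      intro S hSA hSne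
      letI r : V → V → Prop := fun a b => idx a ≤ idx b
      haveI : IsTrans V r := ⟨fun _ _ _ h h' => le_trans h h'⟩
      haveI : IsAntisymm V r := ⟨fun a b h h' => hinj (le_antisymm h h')⟩
      haveI : IsTotal V r := ⟨fun a b => le_total _ _⟩
      set l := S.sort r with hl
      have hmem : ∀ v, v ∈ l ↔ v ∈ S := fun v => Finset.mem_sort r
      have hpair : l.Pairwise (fun a b => idx a < idx b) := by
        have h1 : l.Pairwise r := Finset.pairwise_sort S r
        have h2 : l.Pairwise (· ≠ ·) := (Finset.sort_nodup S r)
        exact (h1.and h2).imp (fun {a b} h =>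
          lt_of_le_of_ne h.1 (fun he => h.2 (hinj he)))
      set I := greedyAux G l ∅ with hI
      have hIS : I ⊆ S := by
        refine (greedyAux_subset G l ∅).trans ?_
        intro w hw
        rcases Finset.mem_union.mp hw with h | h
        · simp at h
        · exact (hmem w).mp (List.mem_toFinset.mp h)
      have hback : ∀ v ∈ S, v ∉ I → ∃ u ∈ I, G.Adj u v ∧ idx u < idx v := by
        intro v hv hvI
        exact greedyAux_back G idx l ∅ hpair (by simp) v ((hmem v).mpr hv) hvI
      have hindep : IndepIn G I := greedyAux_indep G l ∅ (by intro u hu; simp at hu)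
      have hIne : I.Nonempty := by
        obtain ⟨v, hv⟩ := hSne
        by_cases hvI : v ∈ I
        · exact ⟨v, hvI⟩
        · obtain ⟨u, hu, _⟩ := hback v hv hvI
          exact ⟨u, hu⟩
      clear_value l I
      refine ⟨I, hIS, hindep, ?_⟩
      apply ih
      · have : A \ I ⊂ A := Finset.sdiff_ssubset (hIS.trans hSA) hIne
        have := Finset.card_lt_card this
        omega
      · intro v hv
        have hvA : v ∈ A := (Finset.mem_sdiff.mp hv).1
        have hvI : v ∉ I := (Finset.mem_sdiff.mp hv).2
        by_cases hvS : v ∈ S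
        · have hvSI : v ∈ S \ I := Finset.mem_sdiff.mpr ⟨hvS, hvI⟩
          rw [if_pos hvSI]
          obtain ⟨u, huI, hadj, hlt⟩ := hback v hvS hvI
          have huf : u ∈ A.filter fun u => G.Adj u v ∧ idx u < idx v :=
            Finset.mem_filter.mpr ⟨hSA (hIS huI), hadj, hlt⟩
          have hsub : (A \ I).filter (fun u => G.Adj u v ∧ idx u < idx v) ⊆
              (A.filter fun u => G.Adj u v ∧ idx u < idx v).erase u := by
            intro w hw
            rw [Finset.mem_erase]
            rw [Finset.mem_filter, Finset.mem_sdiff] at hw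
            refine ⟨fun he => hw.1.2 (he ▸ huI), Finset.mem_filter.mpr ⟨hw.1.1, hw.2⟩⟩
          have h1 : ((A \ I).filter (fun u => G.Adj u v ∧ idx u < idx v)).card <
              (A.filter fun u => G.Adj u v ∧ idx u < idx v).card :=
            Finset.card_lt_card (ssubset_of_subset_of_ssubset hsub (Finset.erase_ssubset huf))
          have h2 := hf v hvA
          exact Nat.le_pred_of_lt (Nat.lt_of_lt_of_le (Nat.succ_lt_succ h1) h2)
        · have hvSI : v ∉ S \ I := fun h => hvS (Finset.mem_sdiff.mp h).1
          rw [if_neg hvSI]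
          refine le_trans ?_ (hf v hvA)
          have : (A \ I).filter (fun u => G.Adj u v ∧ idx u < idx v) ⊆
              A.filter fun u => G.Adj u v ∧ idx u < idx v :=
            Finset.filter_subset_filter _ (Finset.sdiff_subset)
          exact Nat.add_le_add_right (Finset.card_le_card this) 1

end Greedy

theorem unicyclic_three_paintable' [Fintype V] [DecidableEq V] (G : SimpleGraph V)
    [DecidableRel G.Adj] (hconn : G.Connected)
    (huni : G.edgeFinset.card = Fintype.card V) :
    ∃ n, PaintableAux G n Finset.univ (fun _ => 3) := by
  haveI hnon : Nonempty V := hconn.nonempty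
  have root : V := Classical.arbitrary V
  set n := Fintype.card V with hn
  have hn1 : 1 ≤ n := Fintype.card_pos
  set e := Fintype.equivFin V with he
  set idx : V → ℕ := fun v => G.dist root v * n + (e v : ℕ) with hidx
  have hEnum : ∀ v, (e v : ℕ) < n := fun v => (e v).isLt
  have hmono' : ∀ u v, G.dist root u < G.dist root v → idx u < idx v := by
    intro u v h
    calc idx u = G.dist root u * n + (e u : ℕ) := rfl
      _ < G.dist root u * n + n := Nat.add_lt_add_left (hEnum u) _
      _ = (G.dist root u + 1) * n := by ring
      _ ≤ G.dist root v * n := Nat.mul_le_mul_right n h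
      _ ≤ idx v := Nat.le_add_right _ _
  have hinj : Function.Injective idx := by
    intro u v h
    rcases lt_trichotomy (G.dist root u) (G.dist root v) with hd | hd | hd
    · exact absurd h (Nat.ne_of_lt (hmono' u v hd))
    · have h2 : G.dist root u * n + (e u : ℕ) = G.dist root v * n + (e v : ℕ) := h
      rw [hd] at h2
      exact e.injective (Fin.ext (Nat.add_left_cancel h2))
    · exact absurd h.symm (Nat.ne_of_lt (hmono' v u hd))
  -- the sum of back-degrees equals the number of edges
  set D : Finset (V × V) :=
    (Finset.univ ×ˢ Finset.univ).filter (fun p : V × V => G.Adj p.1 p.2 ∧ idx p.1 < idx p.2)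
    with hD
  have hsum : ∑ v, (Finset.univ.filter fun u => G.Adj u v ∧ idx u < idx v).card = D.card := by
    rw [Finset.card_eq_sum_card_fiberwise (f := Prod.snd) (t := Finset.univ)
      (fun p _ => Finset.mem_univ p.2)]
    refine Finset.sum_congr rfl fun v _ => ?_
    have : D.filter (fun p => p.2 = v) =
        (Finset.univ.filter fun u => G.Adj u v ∧ idx u < idx v).map
          ⟨fun u => (u, v), fun a b h => (Prod.mk.injEq _ _ _ _ ▸ h).1⟩ := by
      ext ⟨a, b⟩
      simp only [hD, Finset.mem_filter, Finset.mem_product, Finset.mem_univ, true_and,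
        Finset.mem_map, Function.Embedding.coeFn_mk, Prod.mk.injEq]
      constructor
      · rintro ⟨⟨h1, h2⟩, rfl⟩; exact ⟨a, ⟨h1, h2⟩, rfl⟩
      · rintro ⟨u, ⟨h1, h2⟩, h⟩; cases h; exact ⟨⟨h1, h2⟩, rfl⟩
    rw [this, Finset.card_map]
  have hDE : D.card = G.edgeFinset.card := by
    apply Finset.card_bij (s := D) (t := G.edgeFinset) (fun p _ => Sym2.mk p.1 p.2)
    · rintro ⟨a, b⟩ hp
      rw [hD, Finset.mem_filter] at hp
      exact SimpleGraph.mem_edgeFinset.mpr hp.2.1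
    · rintro ⟨a, b⟩ ha ⟨c, d⟩ hc h
      rw [hD, Finset.mem_filter] at ha hc
      rcases Sym2.eq_iff.mp h with ⟨rfl, rfl⟩ | ⟨rfl, rfl⟩
      · rfl
      · exact absurd hc.2.2 (Nat.lt_asymm ha.2.2)
    · intro ed hed
      induction ed using Sym2.ind with
      | _ a b =>
        have hadj : G.Adj a b := SimpleGraph.mem_edgeFinset.mp hed
        have hne : idx a ≠ idx b := fun h => G.ne_of_adj hadj (hinj h)
        rcases hne.lt_or_gt with h | h
        · refine ⟨(a, b), ?_, rfl⟩
          rw [hD, Finset.mem_filter]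
          exact ⟨Finset.mem_product.mpr ⟨Finset.mem_univ _, Finset.mem_univ _⟩, hadj, h⟩
        · refine ⟨(b, a), ?_, Sym2.eq_swap⟩
          rw [hD, Finset.mem_filter]
          exact ⟨Finset.mem_product.mpr ⟨Finset.mem_univ _, Finset.mem_univ _⟩, hadj.symm, h⟩
  have hsumn : ∑ v, (Finset.univ.filter fun u => G.Adj u v ∧ idx u < idx v).card = n := by
    rw [hsum, hDE, huni]
  -- the root has back-degree zero
  have hroot : (Finset.univ.filter fun u => G.Adj u root ∧ idx u < idx root).card = 0 := by
    rw [Finset.card_eq_zero, Finset.filter_eq_empty_iff]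
    rintro u _ ⟨hadj, hlt⟩
    have h1 : 1 ≤ G.dist root u := hconn.pos_dist_of_ne (G.ne_of_adj hadj.symm)
    have : idx root < idx u := by
      calc idx root = G.dist root root * n + (e root : ℕ) := rfl
        _ = (e root : ℕ) := by rw [SimpleGraph.dist_self]; ring
        _ < n := hEnum root
        _ ≤ G.dist root u * n := by nlinarith
        _ ≤ idx u := Nat.le_add_right _ _
    exact Nat.lt_asymm this hlt
  -- non-root vertices have back-degree at least one
  have hone : ∀ v, v ≠ root →
      1 ≤ (Finset.univ.filter fun u => G.Adj u v ∧ idx u < idx v).card := by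
    intro v hv
    obtain ⟨p, hp⟩ := (hconn root v).exists_walk_length_eq_dist
    obtain ⟨w, hadj, q, hq⟩ := SimpleGraph.Walk.exists_eq_cons_of_ne hv p.reverse
    have hlen : q.length + 1 = G.dist root v := by
      have h1 : p.reverse.length = p.length := SimpleGraph.Walk.length_reverse p
      rw [hq] at h1
      simpa [hp] using h1
    have hdw : G.dist root w < G.dist root v := by
      have h2 : G.dist root w ≤ q.reverse.length := SimpleGraph.dist_le q.reverse
      rw [SimpleGraph.Walk.length_reverse] at h2
      omega
    refine Finset.card_pos.mpr ⟨w, Finset.mem_filter.mpr ⟨Finset.mem_univ _,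
      hadj.symm, hmono' w v hdw⟩⟩
  -- hence every back-degree is at most two
  have hB2 : ∀ v, (Finset.univ.filter fun u => G.Adj u v ∧ idx u < idx v).card ≤ 2 := by
    intro v
    by_contra hcon
    push_neg at hcon
    have hvroot : v ≠ root := by
      rintro rfl; rw [hroot] at hcon; exact absurd hcon (by norm_num)
    have e1 : (Finset.univ.filter fun u => G.Adj u v ∧ idx u < idx v).card +
        ∑ u ∈ Finset.univ.erase v,
          (Finset.univ.filter fun w => G.Adj w u ∧ idx w < idx u).card = n :=
      (Finset.add_sum_erase Finset.univ
        (fun y => (Finset.univ.filter fun u => G.Adj u y ∧ idx u < idx y).card)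
        (Finset.mem_univ v)).trans hsumn
    have e2 : ((Finset.univ.erase v).erase root).card ≤
        ∑ u ∈ (Finset.univ.erase v).erase root,
          (Finset.univ.filter fun w => G.Adj w u ∧ idx w < idx u).card :=
      by
        have h := Finset.card_nsmul_le_sum ((Finset.univ.erase v).erase root)
          (fun u => (Finset.univ.filter fun w => G.Adj w u ∧ idx w < idx u).card) 1
          (fun u hu => hone u (Finset.ne_of_mem_erase hu))
        simpa using h
    have e3 : ∑ u ∈ (Finset.univ.erase v).erase root,
          (Finset.univ.filter fun w => G.Adj w u ∧ idx w < idx u).card ≤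
        ∑ u ∈ Finset.univ.erase v,
          (Finset.univ.filter fun w => G.Adj w u ∧ idx w < idx u).card :=
      Finset.sum_le_sum_of_subset (Finset.erase_subset _ _)
    have e4 : ((Finset.univ.erase v).erase root).card + 1 = (Finset.univ.erase v).card :=
      Finset.card_erase_add_one (Finset.mem_erase.mpr ⟨Ne.symm hvroot, Finset.mem_univ _⟩)
    have e5 : (Finset.univ.erase v).card + 1 = n :=
      Finset.card_erase_add_one (Finset.mem_univ v)
    omega
  refine ⟨n, paintableAux_of_back G idx hinj n Finset.univ _ (by rw [Finset.card_univ]) ?_⟩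
  intro v _
  exact Nat.add_le_add_right (hB2 v) 1

/-- Every finite connected unicyclic graph (connected with `|E| = |V|`) is
3-paintable: Mrs. Correct wins with 2 erasers at each vertex. -/
theorem unicyclic_three_paintable [Fintype V] [DecidableEq V] (G : SimpleGraph V)
    [DecidableRel G.Adj] (hconn : G.Connected)
    (huni : G.edgeFinset.card = Fintype.card V) : IsPaintable G 3 :=
  unicyclic_three_paintable' G hconn huni
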